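/- Let n ≥ 2 and y ∈ ℝⁿ nonzero. The space E²(n) of elastic 2-tensors on ℝⁿ decomposes as an internal direct sum E²(n) = A_y ⊕ B_y ⊕ C_y, where A_y = { K̂_y u : u ∈ ℝⁿ, ⟨u,y⟩ = 0 }, B_y = { Ĥ_y v : v a symmetric 2-tensor }, and C_y = { g ∈ E²(n) : K̂*_y g = 0 and Ĥ*_y g = 0 }. In particular, every f ∈ E²(n) can be written uniquely as f = Ĥ_y v + K̂_y u + g with u ⊥ y, K̂*_y g = 0, Ĥ*_y g = 0. -/

import Mathlib

open scoped BigOperators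

/-- Fourier-side operator K̂_y on vectors, producing an elastic 2-tensor. -/
noncomputable def Khat {n : ℕ} (y u : Fin n → ℝ) : Fin n → Fin n → Fin n → Fin n → ℝ :=
  fun i j k l =>
    (1/4) * (y i * u j + y j * u i) * (if k = l then (1:ℝ) else 0) +
    (1/4) * (y k * u l + y l * u k) * (if i = j then (1:ℝ) else 0)

/-- Fourier-side operator Ĥ_y on symmetric 2-tensors, producing an elastic 2-tensor. -/
noncomputable def Hhat {n : ℕ} (y : Fin n → ℝ) (v : Fin n → Fin n → ℝ) :
    Fin n → Fin n → Fin n → Fin n → ℝ :=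
  fun i j k l => (1/2) * (y i * y j * v k l + y k * y l * v i j)

/-- Fourier-side operator K̂*_y on elastic 2-tensors. -/
noncomputable def KhatStar {n : ℕ} (y : Fin n → ℝ) (w : Fin n → Fin n → Fin n → Fin n → ℝ) :
    Fin n → ℝ :=
  fun i => ∑ j, ∑ k, y j * w i j k k

/-- Fourier-side operator Ĥ*_y on elastic 2-tensors. -/
noncomputable def HhatStar {n : ℕ} (y : Fin n → ℝ) (w : Fin n → Fin n → Fin n → Fin n → ℝ) :
    Fin n → Fin n → ℝ :=
  fun i j => ∑ k, ∑ l, y k * y l * w i j k l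

/-- The symmetries of an elastic 2-tensor: symmetric in the first pair, the second
pair, and under swapping the two pairs. -/
def IsElastic2 {n : ℕ} (w : Fin n → Fin n → Fin n → Fin n → ℝ) : Prop :=
  (∀ i j k l, w i j k l = w j i k l) ∧ (∀ i j k l, w i j k l = w i j l k) ∧
  (∀ i j k l, w i j k l = w k l i j)

/- ### Auxiliary machinery -/

lemma sum2_ext {n : ℕ} (f g : Fin n → Fin n → ℝ)
    (h : ∀ x z, f x z + f z x = g x z + g z x) :
    ∑ x, ∑ z, f x z = ∑ x, ∑ z, g x z := by
  have h1 : (∑ x, ∑ z, f x z) = ∑ x, ∑ z, f z x := Finset.sum_comm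
  have h2 : (∑ x, ∑ z, g x z) = ∑ x, ∑ z, g z x := Finset.sum_comm
  have h3 : (∑ x, ∑ z, f x z) + (∑ x, ∑ z, f x z)
      = (∑ x, ∑ z, g x z) + (∑ x, ∑ z, g x z) := by
    nth_rewrite 2 [h1]; nth_rewrite 2 [h2]
    simp only [← Finset.sum_add_distrib]
    exact Finset.sum_congr rfl fun x _ => Finset.sum_congr rfl fun z _ => h x z
  linarith

lemma KhatStar_Khat {n : ℕ} (y u : Fin n → ℝ) (i : Fin n) :
    KhatStar y (Khat y u) i =
      (n/4) * ((∑ k, y k * u k) * y i + (∑ k, y k * y k) * u i)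
        + (1/2) * (∑ k, y k * u k) * y i := by
  simp only [KhatStar, Khat, if_pos rfl, mul_one, mul_ite, ite_mul, mul_zero, zero_mul,
    mul_add, add_mul, Finset.sum_add_distrib, Finset.mul_sum, Finset.sum_mul,
    Finset.sum_ite_irrel, Finset.sum_const_zero,
    Finset.sum_ite_eq, Finset.sum_ite_eq', Finset.mem_univ, if_true,
    Finset.sum_const, Finset.card_univ, Fintype.card_fin, nsmul_eq_mul]
  simp only [Finset.sum_mul, ← Finset.sum_add_distrib]
  exact Finset.sum_congr rfl (fun x _ => by ring)

lemma HhatStar_Khat {n : ℕ} (y u : Fin n → ℝ) (i j : Fin n) :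
    HhatStar y (Khat y u) i j =
      ((∑ k, y k * y k)/4) * (y i * u j + y j * u i)
        + ((∑ k, y k * y k) * (∑ k, y k * u k)/2) * (if i = j then (1:ℝ) else 0) := by
  simp only [HhatStar, Khat, if_pos rfl, mul_one, mul_ite, ite_mul, mul_zero, zero_mul,
    mul_add, add_mul, Finset.sum_add_distrib, Finset.mul_sum, Finset.sum_mul,
    Finset.sum_ite_irrel, Finset.sum_const_zero,
    Finset.sum_ite_eq, Finset.sum_ite_eq', Finset.mem_univ, if_true,
    Finset.sum_const, Finset.card_univ, Fintype.card_fin, nsmul_eq_mul]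
  congr 1
  · simp only [Finset.sum_div, Finset.sum_mul, ← Finset.sum_add_distrib]
    exact Finset.sum_congr rfl (fun x _ => by ring)
  · split
    · simp only [Finset.sum_div, ← Finset.sum_add_distrib]
      exact sum2_ext _ _ (fun x z => by ring)
    · rfl

lemma KhatStar_Hhat {n : ℕ} (y : Fin n → ℝ) (v : Fin n → Fin n → ℝ) (i : Fin n) :
    KhatStar y (Hhat y v) i =
      (1/2) * ((∑ k, y k * y k) * (∑ k, v k k) * y i
        + (∑ k, y k * y k) * (∑ j, y j * v i j)) := by
  simp only [KhatStar, Hhat, mul_add, add_mul, Finset.sum_add_distrib, Finset.mul_sum,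
    Finset.sum_mul]
  simp only [Finset.sum_mul, Finset.mul_sum, ← Finset.sum_add_distrib]
  refine sum2_ext _ _ (fun x z => ?_)
  ring

lemma HhatStar_Hhat {n : ℕ} (y : Fin n → ℝ) (v : Fin n → Fin n → ℝ) (i j : Fin n) :
    HhatStar y (Hhat y v) i j =
      (1/2) * ((∑ k, ∑ l, y k * y l * v k l) * (y i * y j)
        + (∑ k, y k * y k)^2 * v i j) := by
  rw [show ((∑ k, y k * y k : ℝ)^2) = (∑ k, y k * y k) * (∑ l, y l * y l) from by ring]
  simp only [HhatStar, Hhat, mul_add, add_mul, Finset.sum_add_distrib, Finset.mul_sum,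
    Finset.sum_mul]
  simp only [← Finset.sum_add_distrib]
  refine sum2_ext _ _ (fun x z => ?_)
  ring

lemma sum_split3 {n : ℕ} (h p q r : Fin n → ℝ) (c1 c2 c3 : ℝ)
    (hb : ∀ j, h j = c1 * p j + c2 * q j + c3 * r j) :
    ∑ j, h j = c1 * (∑ j, p j) + c2 * (∑ j, q j) + c3 * (∑ j, r j) := by
  simp only [Finset.mul_sum, ← Finset.sum_add_distrib]
  exact Finset.sum_congr rfl fun j _ => hb j

lemma sum_split4 {n : ℕ} (h p q r t : Fin n → ℝ) (c1 c2 c3 c4 : ℝ)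
    (hb : ∀ j, h j = c1 * p j + c2 * q j + c3 * r j + c4 * t j) :
    ∑ j, h j = c1 * (∑ j, p j) + c2 * (∑ j, q j) + c3 * (∑ j, r j) + c4 * (∑ j, t j) := by
  simp only [Finset.mul_sum, ← Finset.sum_add_distrib]
  exact Finset.sum_congr rfl fun j _ => hb j

lemma sum_mul_boole' {n : ℕ} (y : Fin n → ℝ) (i : Fin n) :
    ∑ j, y j * (if i = j then (1:ℝ) else 0) = y i := by
  simp

lemma Sq_pos {n : ℕ} (y : Fin n → ℝ) (hy : y ≠ 0) : 0 < ∑ k, y k * y k := by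
  obtain ⟨i, hi⟩ := Function.ne_iff.mp hy
  have h1 : (0:ℝ) < y i * y i := mul_self_pos.mpr hi
  have h2 : y i * y i ≤ ∑ k, y k * y k :=
    Finset.single_le_sum (f := fun k => y k * y k) (fun k _ => mul_self_nonneg (y k))
      (Finset.mem_univ i)
  linarith
lemma homog {n : ℕ} (hn : 2 ≤ n) (y : Fin n → ℝ) (hy : y ≠ 0)
    (u : Fin n → ℝ) (v : Fin n → Fin n → ℝ) (g : Fin n → Fin n → Fin n → Fin n → ℝ)
    (hu : ∑ k, y k * u k = 0)
    (hK : KhatStar y g = 0) (hH : HhatStar y g = 0)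
    (hzero : ∀ i j k l, Hhat y v i j k l + Khat y u i j k l + g i j k l = 0) :
    (∀ i, u i = 0) ∧ (∀ i j, v i j = 0) ∧ (∀ i j k l, g i j k l = 0) := by
  have hs0 : 0 < ∑ k, y k * y k := Sq_pos y hy
  have hs : (∑ k, y k * y k) ≠ 0 := ne_of_gt hs0
  have hn1 : ((n:ℝ) - 1) ≠ 0 := by
    have : (2:ℝ) ≤ (n:ℝ) := by exact_mod_cast hn
    linarith
  -- apply KhatStar to hzero
  have hA : ∀ i, KhatStar y (Hhat y v) i + KhatStar y (Khat y u) i + KhatStar y g i = 0 := by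
    intro i
    simp only [KhatStar, ← Finset.sum_add_distrib]
    refine Finset.sum_eq_zero fun j _ => Finset.sum_eq_zero fun k _ => ?_
    rw [show y j * Hhat y v i j k k + y j * Khat y u i j k k + y j * g i j k k
        = y j * (Hhat y v i j k k + Khat y u i j k k + g i j k k) from by ring,
      hzero, mul_zero]
  have hB : ∀ i j, HhatStar y (Hhat y v) i j + HhatStar y (Khat y u) i j + HhatStar y g i j = 0 := by
    intro i j
    simp only [HhatStar, ← Finset.sum_add_distrib]
    refine Finset.sum_eq_zero fun k _ => Finset.sum_eq_zero fun l _ => ?_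
    rw [show y k * y l * Hhat y v i j k l + y k * y l * Khat y u i j k l + y k * y l * g i j k l
        = y k * y l * (Hhat y v i j k l + Khat y u i j k l + g i j k l) from by ring,
      hzero, mul_zero]
  have hA' : ∀ i, (1/2) * ((∑ k, y k * y k) * (∑ k, v k k) * y i
      + (∑ k, y k * y k) * (∑ j, y j * v i j))
      + ((n/4) * (0 * y i + (∑ k, y k * y k) * u i) + (1/2) * 0 * y i) = 0 := by
    intro i
    have h1 := hA i
    rw [KhatStar_Hhat, KhatStar_Khat, hK] at h1
    simp only [Pi.zero_apply, add_zero] at h1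
    linear_combination h1 - ((n/4) * y i + (1/2) * y i) * hu
  have hB' : ∀ i j, (1/2) * ((∑ k, ∑ l, y k * y l * v k l) * (y i * y j)
      + (∑ k, y k * y k)^2 * v i j)
      + (((∑ k, y k * y k)/4) * (y i * u j + y j * u i)
        + ((∑ k, y k * y k) * 0/2) * (if i = j then (1:ℝ) else 0)) = 0 := by
    intro i j
    have h1 := hB i j
    rw [HhatStar_Hhat, HhatStar_Khat, hH] at h1
    simp only [Pi.zero_apply, add_zero] at h1
    linear_combination h1 - ((∑ k, y k * y k)/2 * (if i = j then (1:ℝ) else 0)) * hu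
  -- contraction of hB' with y j
  have hC : ∀ i, ((∑ k, ∑ l, y k * y l * v k l)/2) * ((∑ k, y k * y k) * y i)
      + ((∑ k, y k * y k)^2/2) * (∑ j, y j * v i j)
      + ((∑ k, y k * y k)^2/4) * u i = 0 := by
    intro i
    have h0 : ∑ j, y j * ((1/2) * ((∑ k, ∑ l, y k * y l * v k l) * (y i * y j)
        + (∑ k, y k * y k)^2 * v i j)
        + (((∑ k, y k * y k)/4) * (y i * u j + y j * u i)
          + ((∑ k, y k * y k) * 0/2) * (if i = j then (1:ℝ) else 0))) = 0 :=
      Finset.sum_eq_zero fun j _ => by rw [hB' i j, mul_zero]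
    rw [sum_split4 _ (fun j => y j * y j) (fun j => y j * v i j) (fun j => y j * u j)
        (fun j => y j * (if i = j then (1:ℝ) else 0))
        ((1/2) * (∑ k, ∑ l, y k * y l * v k l) * y i + ((∑ k, y k * y k)/4) * u i)
        ((1/2) * (∑ k, y k * y k)^2)
        (((∑ k, y k * y k)/4) * y i)
        ((∑ k, y k * y k) * 0/2)
        (fun j => by ring)] at h0
    rw [hu, sum_mul_boole'] at h0
    nlinarith [h0]
  have hQrw : ∑ i, y i * (∑ j, y j * v i j) = ∑ k, ∑ l, y k * y l * v k l := by
    simp only [Finset.mul_sum]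
    exact Finset.sum_congr rfl fun k _ => Finset.sum_congr rfl fun l _ => by ring
  -- contraction of hC with y i gives Q = 0
  have hQ : (∑ k, ∑ l, y k * y l * v k l) = 0 := by
    have h0 : ∑ i, y i * (((∑ k, ∑ l, y k * y l * v k l)/2) * ((∑ k, y k * y k) * y i)
        + ((∑ k, y k * y k)^2/2) * (∑ j, y j * v i j)
        + ((∑ k, y k * y k)^2/4) * u i) = 0 :=
      Finset.sum_eq_zero fun i _ => by rw [hC i, mul_zero]
    rw [sum_split3 _ (fun i => y i * y i) (fun i => y i * (∑ j, y j * v i j))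
        (fun i => y i * u i)
        (((∑ k, ∑ l, y k * y l * v k l)/2) * (∑ k, y k * y k))
        ((∑ k, y k * y k)^2/2)
        ((∑ k, y k * y k)^2/4)
        (fun i => by ring)] at h0
    rw [hu, hQrw] at h0
    have h2 : (∑ k, ∑ l, y k * y l * v k l) * ((∑ k, y k * y k) * (∑ k, y k * y k)) = 0 := by
      linear_combination h0
    rcases mul_eq_zero.mp h2 with h | h
    · exact h
    · exact absurd h (mul_ne_zero hs hs)
  -- trace of hB' gives ∑ v k k = 0
  have hTr : (∑ k, v k k) = 0 := by
    have h0 : ∑ i, ((1/2) * ((∑ k, ∑ l, y k * y l * v k l) * (y i * y i)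
        + (∑ k, y k * y k)^2 * v i i)
        + (((∑ k, y k * y k)/4) * (y i * u i + y i * u i)
          + ((∑ k, y k * y k) * 0/2) * (if i = i then (1:ℝ) else 0))) = 0 :=
      Finset.sum_eq_zero fun i _ => by rw [hB' i i]
    rw [sum_split4 _ (fun i => y i * y i) (fun i => v i i) (fun i => y i * u i)
        (fun i => if i = i then (1:ℝ) else 0)
        ((1/2) * (∑ k, ∑ l, y k * y l * v k l))
        ((1/2) * (∑ k, y k * y k)^2)
        ((∑ k, y k * y k)/2)
        ((∑ k, y k * y k) * 0/2)
        (fun i => by ring)] at h0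
    rw [hu, hQ] at h0
    have h2 : (∑ k, v k k) * ((∑ k, y k * y k) * (∑ k, y k * y k)) = 0 := by
      linear_combination 2 * h0
    rcases mul_eq_zero.mp h2 with h | h
    · exact h
    · exact absurd h (mul_ne_zero hs hs)
  have hu0 : ∀ i, u i = 0 := by
    intro i
    have h1 := hA' i
    have h2 := hC i
    rw [hTr] at h1
    rw [hQ] at h2
    have h3 : ((n:ℝ)-1) * ((∑ k, y k * y k) * (∑ k, y k * y k)) * u i = 0 := by
      linear_combination (4*(∑ k, y k * y k))*h1 - 4*h2
    rcases mul_eq_zero.mp h3 with h | h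
    · exact absurd h (mul_ne_zero hn1 (mul_ne_zero hs hs))
    · exact h
  have hv0 : ∀ i j, v i j = 0 := by
    intro i j
    have h4 : ((∑ k, y k * y k) * (∑ k, y k * y k)) * v i j = 0 := by
      linear_combination 2*(hB' i j) - (y i * y j)*hQ
        - ((∑ k, y k * y k)/2)*(y i)*(hu0 j) - ((∑ k, y k * y k)/2)*(y j)*(hu0 i)
    rcases mul_eq_zero.mp h4 with h | h
    · exact absurd h (mul_ne_zero hs hs)
    · exact h
  refine ⟨hu0, hv0, fun i j k l => ?_⟩
  have h5 := hzero i j k l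
  simp only [Hhat, Khat, hu0, hv0, mul_zero, zero_mul, add_zero, zero_add, mul_one] at h5
  simpa using h5

/- ### Construction of the decomposition -/

noncomputable def Sq {n : ℕ} (y : Fin n → ℝ) : ℝ := ∑ k, y k * y k

noncomputable def bv {n : ℕ} (y : Fin n → ℝ) (f : Fin n → Fin n → Fin n → Fin n → ℝ) :
    Fin n → ℝ := fun i => ∑ j, y j * HhatStar y f i j

noncomputable def trB {n : ℕ} (y : Fin n → ℝ) (f : Fin n → Fin n → Fin n → Fin n → ℝ) : ℝ :=
  ∑ i, HhatStar y f i i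

noncomputable def QB {n : ℕ} (y : Fin n → ℝ) (f : Fin n → Fin n → Fin n → Fin n → ℝ) : ℝ :=
  ∑ i, y i * bv y f i

noncomputable def QV {n : ℕ} (y : Fin n → ℝ) (f : Fin n → Fin n → Fin n → Fin n → ℝ) : ℝ :=
  QB y f / (Sq y)^2

noncomputable def trV {n : ℕ} (y : Fin n → ℝ) (f : Fin n → Fin n → Fin n → Fin n → ℝ) : ℝ :=
  (2 * trB y f / Sq y - QV y f) / Sq y

noncomputable def uu {n : ℕ} (y : Fin n → ℝ) (f : Fin n → Fin n → Fin n → Fin n → ℝ) :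
    Fin n → ℝ := fun i =>
  (4/(((n:ℝ)-1) * Sq y)) * (KhatStar y f i - (Sq y/2) * trV y f * y i
    - (1/Sq y) * bv y f i + (QV y f/2) * y i)

noncomputable def vv {n : ℕ} (y : Fin n → ℝ) (f : Fin n → Fin n → Fin n → Fin n → ℝ) :
    Fin n → Fin n → ℝ := fun i j =>
  (2/(Sq y)^2) * (HhatStar y f i j - (1/2) * QV y f * (y i * y j)
    - (Sq y/4) * (y i * uu y f j + uu y f i * y j))

noncomputable def gg {n : ℕ} (y : Fin n → ℝ) (f : Fin n → Fin n → Fin n → Fin n → ℝ) :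
    Fin n → Fin n → Fin n → Fin n → ℝ := fun i j k l =>
  f i j k l - Hhat y (vv y f) i j k l - Khat y (uu y f) i j k l

lemma L_key {n : ℕ} (y : Fin n → ℝ) (f : Fin n → Fin n → Fin n → Fin n → ℝ)
    (hf : IsElastic2 f) : ∑ i, y i * KhatStar y f i = trB y f := by
  have h1 : trB y f = ∑ i, ∑ k, ∑ l, y k * y l * f k l i i := by
    unfold trB HhatStar
    exact Finset.sum_congr rfl fun i _ => Finset.sum_congr rfl fun k _ =>
      Finset.sum_congr rfl fun l _ => by rw [hf.2.2]
  rw [h1, Finset.sum_comm]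
  refine Finset.sum_congr rfl fun a _ => ?_
  rw [Finset.sum_comm]
  unfold KhatStar
  simp only [Finset.mul_sum]
  exact Finset.sum_congr rfl fun j _ => Finset.sum_congr rfl fun k _ => by ring

lemma L_bsym {n : ℕ} (y : Fin n → ℝ) (f : Fin n → Fin n → Fin n → Fin n → ℝ)
    (hf : IsElastic2 f) (i j : Fin n) : HhatStar y f i j = HhatStar y f j i := by
  unfold HhatStar
  exact Finset.sum_congr rfl fun k _ => Finset.sum_congr rfl fun l _ => by rw [hf.1]

lemma L_P {n : ℕ} (y : Fin n → ℝ) (f : Fin n → Fin n → Fin n → Fin n → ℝ)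
    (hf : IsElastic2 f) (hs : Sq y ≠ 0) (hn1 : ((n:ℝ) - 1) ≠ 0) :
    ∑ k, y k * uu y f k = 0 := by
  rw [sum_split3 (fun k => y k * uu y f k) (fun k => y k * KhatStar y f k)
      (fun k => y k * y k) (fun k => y k * bv y f k)
      (4/(((n:ℝ)-1) * Sq y))
      ((4/(((n:ℝ)-1) * Sq y)) * (-(Sq y/2) * trV y f + QV y f/2))
      (-(4/(((n:ℝ)-1) * Sq y)) * (1/Sq y))
      (fun k => by simp only [uu]; ring)]
  rw [L_key y f hf,
    show (∑ k, y k * y k) = Sq y from rfl,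
    show (∑ k, y k * bv y f k) = QB y f from rfl]
  simp only [trV, QV]
  field_simp
  ring

lemma L_T {n : ℕ} (y : Fin n → ℝ) (f : Fin n → Fin n → Fin n → Fin n → ℝ)
    (hf : IsElastic2 f) (hs : Sq y ≠ 0) (hn1 : ((n:ℝ) - 1) ≠ 0) :
    ∑ k, vv y f k k = trV y f := by
  rw [sum_split3 (fun k => vv y f k k) (fun k => HhatStar y f k k)
      (fun k => y k * y k) (fun k => y k * uu y f k)
      (2/(Sq y)^2)
      (-(2/(Sq y)^2) * ((1/2) * QV y f))
      (-(2/(Sq y)^2) * (Sq y/4) * 2)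
      (fun k => by simp only [vv]; ring)]
  rw [L_P y f hf hs hn1,
    show (∑ k, HhatStar y f k k) = trB y f from rfl,
    show (∑ k, y k * y k) = Sq y from rfl]
  simp only [trV, QV]
  field_simp
  ring

lemma L_vy {n : ℕ} (y : Fin n → ℝ) (f : Fin n → Fin n → Fin n → Fin n → ℝ)
    (hf : IsElastic2 f) (hs : Sq y ≠ 0) (hn1 : ((n:ℝ) - 1) ≠ 0) (i : Fin n) :
    ∑ j, y j * vv y f i j
      = (2/(Sq y)^2) * bv y f i - (QV y f/Sq y) * y i - (1/2) * uu y f i := by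
  rw [sum_split3 (fun j => y j * vv y f i j) (fun j => y j * HhatStar y f i j)
      (fun j => y j * y j) (fun j => y j * uu y f j)
      (2/(Sq y)^2)
      ((2/(Sq y)^2) * (-(1/2) * QV y f * y i - (Sq y/4) * uu y f i))
      ((2/(Sq y)^2) * (-(Sq y/4) * y i))
      (fun j => by simp only [vv]; ring)]
  rw [L_P y f hf hs hn1,
    show (∑ j, y j * HhatStar y f i j) = bv y f i from rfl,
    show (∑ j, y j * y j) = Sq y from rfl]
  field_simp
  ring

lemma L_Qvv {n : ℕ} (y : Fin n → ℝ) (f : Fin n → Fin n → Fin n → Fin n → ℝ)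
    (hf : IsElastic2 f) (hs : Sq y ≠ 0) (hn1 : ((n:ℝ) - 1) ≠ 0) :
    ∑ k, ∑ l, y k * y l * vv y f k l = QV y f := by
  have h1 : ∑ k, ∑ l, y k * y l * vv y f k l = ∑ k, y k * (∑ l, y l * vv y f k l) := by
    simp only [Finset.mul_sum]
    exact Finset.sum_congr rfl fun k _ => Finset.sum_congr rfl fun l _ => by ring
  rw [h1]
  have h2 : ∀ k, y k * (∑ l, y l * vv y f k l)
      = y k * ((2/(Sq y)^2) * bv y f k - (QV y f/Sq y) * y k - (1/2) * uu y f k) :=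
    fun k => by rw [L_vy y f hf hs hn1 k]
  rw [Finset.sum_congr rfl fun k _ => h2 k]
  rw [sum_split3 _ (fun k => y k * bv y f k) (fun k => y k * y k) (fun k => y k * uu y f k)
      (2/(Sq y)^2) (-(QV y f/Sq y)) (-(1/2))
      (fun k => by ring)]
  rw [L_P y f hf hs hn1,
    show (∑ k, y k * bv y f k) = QB y f from rfl,
    show (∑ k, y k * y k) = Sq y from rfl]
  simp only [QV]
  field_simp
  ring

lemma ite_comm' {n : ℕ} (i j : Fin n) :
    (if i = j then (1:ℝ) else 0) = (if j = i then (1:ℝ) else 0) := by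
  by_cases h : i = j <;> simp [h, eq_comm]

lemma Khat_elastic {n : ℕ} (y u : Fin n → ℝ) : IsElastic2 (Khat y u) := by
  refine ⟨fun i j k l => ?_, fun i j k l => ?_, fun i j k l => ?_⟩ <;>
    simp only [Khat]
  · rw [ite_comm' i j]; ring
  · rw [ite_comm' k l]; ring
  · rw [ite_comm' i j, ite_comm' k l]; ring

lemma Hhat_elastic {n : ℕ} (y : Fin n → ℝ) (v : Fin n → Fin n → ℝ)
    (hv : ∀ i j, v i j = v j i) : IsElastic2 (Hhat y v) := by
  refine ⟨fun i j k l => ?_, fun i j k l => ?_, fun i j k l => ?_⟩ <;>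
    simp only [Hhat]
  · rw [hv i j]; ring
  · rw [hv k l]; ring
  · ring

lemma L_vsym {n : ℕ} (y : Fin n → ℝ) (f : Fin n → Fin n → Fin n → Fin n → ℝ)
    (hf : IsElastic2 f) (i j : Fin n) : vv y f i j = vv y f j i := by
  simp only [vv]
  rw [L_bsym y f hf i j]
  ring

lemma gg_elastic {n : ℕ} (y : Fin n → ℝ) (f : Fin n → Fin n → Fin n → Fin n → ℝ)
    (hf : IsElastic2 f) : IsElastic2 (gg y f) := by
  have hH := Hhat_elastic y (vv y f) (L_vsym y f hf)
  have hK := Khat_elastic y (uu y f)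
  exact ⟨fun i j k l => by simp only [gg]; rw [hf.1, hH.1, hK.1],
    fun i j k l => by simp only [gg]; rw [hf.2.1, hH.2.1, hK.2.1],
    fun i j k l => by simp only [gg]; rw [hf.2.2, hH.2.2, hK.2.2]⟩

lemma L_Kg {n : ℕ} (y : Fin n → ℝ) (f : Fin n → Fin n → Fin n → Fin n → ℝ)
    (hf : IsElastic2 f) (hs : Sq y ≠ 0) (hn1 : ((n:ℝ) - 1) ≠ 0) :
    KhatStar y (gg y f) = 0 := by
  funext i
  have hsplit : KhatStar y (gg y f) i
      = KhatStar y f i - KhatStar y (Hhat y (vv y f)) i - KhatStar y (Khat y (uu y f)) i := by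
    simp only [KhatStar, gg, mul_sub, Finset.sum_sub_distrib]
  rw [Pi.zero_apply, hsplit, KhatStar_Hhat, KhatStar_Khat,
    L_T y f hf hs hn1, L_vy y f hf hs hn1 i, L_P y f hf hs hn1,
    show (∑ k, y k * y k) = Sq y from rfl]
  simp only [uu]
  field_simp
  ring

lemma L_Hg {n : ℕ} (y : Fin n → ℝ) (f : Fin n → Fin n → Fin n → Fin n → ℝ)
    (hf : IsElastic2 f) (hs : Sq y ≠ 0) (hn1 : ((n:ℝ) - 1) ≠ 0) :
    HhatStar y (gg y f) = 0 := by
  funext i j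
  have hsplit : HhatStar y (gg y f) i j
      = HhatStar y f i j - HhatStar y (Hhat y (vv y f)) i j
        - HhatStar y (Khat y (uu y f)) i j := by
    simp only [HhatStar, gg, mul_sub, Finset.sum_sub_distrib]
  rw [Pi.zero_apply, Pi.zero_apply, hsplit, HhatStar_Hhat, HhatStar_Khat,
    L_Qvv y f hf hs hn1, L_P y f hf hs hn1,
    show (∑ k, y k * y k) = Sq y from rfl]
  simp only [vv]
  field_simp
  ring

/-- the direct sum decomposition E²(n) = A_y ⊕ B_y ⊕ C_y: every elastic
2-tensor f is uniquely f = Ĥ_y v + K̂_y u + g with u ⊥ y, K̂*_y g = Ĥ*_y g = 0. -/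
theorem stmt_7 (n : ℕ) (hn : 2 ≤ n) (y : Fin n → ℝ) (hy : y ≠ 0)
    (f : Fin n → Fin n → Fin n → Fin n → ℝ) (hf : IsElastic2 f) :
    ∃! p : (Fin n → ℝ) × (Fin n → Fin n → ℝ) × (Fin n → Fin n → Fin n → Fin n → ℝ),
      (∑ i, p.1 i * y i = 0) ∧
      (∀ i j, p.2.1 i j = p.2.1 j i) ∧
      IsElastic2 p.2.2 ∧
      KhatStar y p.2.2 = 0 ∧
      HhatStar y p.2.2 = 0 ∧
      (∀ i j k l, f i j k l = Hhat y p.2.1 i j k l + Khat y p.1 i j k l + p.2.2 i j k l) := by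
  have hs : Sq y ≠ 0 := ne_of_gt (Sq_pos y hy)
  have hn1 : ((n:ℝ) - 1) ≠ 0 := by
    have : (2:ℝ) ≤ (n:ℝ) := by exact_mod_cast hn
    linarith
  have hP := L_P y f hf hs hn1
  refine ⟨⟨uu y f, vv y f, gg y f⟩, ⟨?_, ?_, ?_, ?_, ?_, ?_⟩, ?_⟩
  · rw [show (∑ i, uu y f i * y i) = ∑ i, y i * uu y f i from
      Finset.sum_congr rfl fun i _ => mul_comm _ _]
    exact hP
  · exact L_vsym y f hf
  · exact gg_elastic y f hf
  · exact L_Kg y f hf hs hn1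
  · exact L_Hg y f hf hs hn1
  · intro i j k l; simp only [gg]; ring
  · rintro ⟨u', v', g'⟩ ⟨h1, h2, h3, h4, h5, h6⟩
    have hu' : ∑ i, y i * (u' i - uu y f i) = 0 := by
      simp only [mul_sub, Finset.sum_sub_distrib]
      rw [hP, show (∑ i, y i * u' i) = ∑ i, u' i * y i from
        Finset.sum_congr rfl fun i _ => mul_comm _ _, h1]
      ring
    have hK' : KhatStar y (fun i j k l => g' i j k l - gg y f i j k l) = 0 := by
      funext i
      have t1 : ∑ j, ∑ k, y j * g' i j k k = 0 := by
        have := congrFun h4 i; simpa [KhatStar] using this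
      have t2 : ∑ j, ∑ k, y j * gg y f i j k k = 0 := by
        have := congrFun (L_Kg y f hf hs hn1) i; simpa [KhatStar] using this
      simp only [KhatStar, mul_sub, Finset.sum_sub_distrib, Pi.zero_apply]
      rw [t1, t2, sub_zero]
    have hH' : HhatStar y (fun i j k l => g' i j k l - gg y f i j k l) = 0 := by
      funext i j
      have t1 : ∑ k, ∑ l, y k * y l * g' i j k l = 0 := by
        have := congrFun (congrFun h5 i) j; simpa [HhatStar] using this
      have t2 : ∑ k, ∑ l, y k * y l * gg y f i j k l = 0 := by
        have := congrFun (congrFun (L_Hg y f hf hs hn1) i) j; simpa [HhatStar] using this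
      simp only [HhatStar, mul_sub, Finset.sum_sub_distrib, Pi.zero_apply]
      rw [t1, t2, sub_zero]
    have hz : ∀ i j k l, Hhat y (fun a b => v' a b - vv y f a b) i j k l
        + Khat y (fun a => u' a - uu y f a) i j k l
        + (g' i j k l - gg y f i j k l) = 0 := by
      intro i j k l
      have e := h6 i j k l
      have e' : f i j k l = Hhat y (vv y f) i j k l + Khat y (uu y f) i j k l
          + gg y f i j k l := by simp only [gg]; ring
      simp only [Hhat, Khat]
      simp only [Hhat, Khat] at e e'
      ring_nf
      ring_nf at e e'
      linarith [e, e']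
    obtain ⟨hU, hV, hG⟩ := homog hn y hy (fun a => u' a - uu y f a)
      (fun a b => v' a b - vv y f a b) (fun i j k l => g' i j k l - gg y f i j k l)
      hu' hK' hH' hz
    have e1 : u' = uu y f := funext fun i => by have := hU i; simpa [sub_eq_zero] using this
    have e2 : v' = vv y f := funext fun i => funext fun j => by
      have := hV i j; simpa [sub_eq_zero] using this
    have e3 : g' = gg y f := funext fun i => funext fun j => funext fun k => funext fun l => by
      have := hG i j k l; simpa [sub_eq_zero] using this
    exact Prod.ext e1 (Prod.ext e2 e3)
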